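/- Let Z be a complex q×q PSD matrix and W a real q×q positive definite matrix. Then ‖√W (Im Z) √W‖₁ ≤ tr(W · Re Z). Consequently tr(W Re Z) + ‖√W (Im Z) √W‖₁ ≤ 2 tr(W Re Z). -/

import Mathlib

open Matrix ComplexOrder

/-- The positive semidefinite square root of a positive semidefinite matrix
(the definition removed from Mathlib, restored with its old meaning). -/
noncomputable def Matrix.PosSemidef.sqrt {n : Type*} [Fintype n] [DecidableEq n] {𝕜 : Type*}
    [RCLike 𝕜] {A : Matrix n n 𝕜} (hA : A.PosSemidef) : Matrix n n 𝕜 :=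
  hA.1.eigenvectorUnitary.1 * diagonal ((↑) ∘ (√·) ∘ hA.1.eigenvalues) *
  (star hA.1.eigenvectorUnitary : Matrix n n 𝕜)

/-- The trace norm (sum of singular values) of a matrix over `𝕜 = ℝ` or `ℂ`. -/
noncomputable def traceNorm {n : Type*} [Fintype n] [DecidableEq n] {𝕜 : Type*} [RCLike 𝕜]
    (M : Matrix n n 𝕜) : ℝ :=
  RCLike.re (Matrix.trace (Matrix.posSemidef_conjTranspose_mul_self M).sqrt)

/-- The entrywise real part of a complex matrix. -/
def rePart {n : Type*} (A : Matrix n n ℂ) : Matrix n n ℝ := fun i j => (A i j).re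

/-- The entrywise imaginary part of a complex matrix. -/
def imPart {n : Type*} (A : Matrix n n ℂ) : Matrix n n ℝ := fun i j => (A i j).im

/- ### Auxiliary lemmas -/

open scoped MatrixOrder in
lemma Matrix.PosSemidef.sqrt_eq_cfc {n : Type*} [Fintype n] [DecidableEq n] {𝕜 : Type*}
    [RCLike 𝕜] {A : Matrix n n 𝕜} (hA : A.PosSemidef) : hA.sqrt = CFC.sqrt A := by
  rw [CFC.sqrt_eq_real_sqrt A hA.nonneg, cfcₙ_eq_cfc, hA.1.cfc_eq]
  simp [Matrix.IsHermitian.cfc, Matrix.PosSemidef.sqrt, Unitary.conjStarAlgAut_apply]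

open scoped MatrixOrder in
lemma Matrix.PosSemidef.posSemidef_sqrt {n : Type*} [Fintype n] [DecidableEq n] {𝕜 : Type*}
    [RCLike 𝕜] {A : Matrix n n 𝕜} (hA : A.PosSemidef) : hA.sqrt.PosSemidef := by
  rw [hA.sqrt_eq_cfc]
  exact (CFC.sqrt_nonneg A).posSemidef

open scoped MatrixOrder in
lemma Matrix.PosSemidef.sqrt_mul_self {n : Type*} [Fintype n] [DecidableEq n] {𝕜 : Type*}
    [RCLike 𝕜] {A : Matrix n n 𝕜} (hA : A.PosSemidef) : hA.sqrt * hA.sqrt = A := by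
  rw [hA.sqrt_eq_cfc]
  exact CFC.sqrt_mul_sqrt_self A hA.nonneg

open scoped MatrixOrder in
lemma Matrix.PosSemidef.eq_sqrt_of_sq_eq {n : Type*} [Fintype n] [DecidableEq n] {𝕜 : Type*}
    [RCLike 𝕜] {A : Matrix n n 𝕜} (hA : A.PosSemidef) {B : Matrix n n 𝕜} (hB : B.PosSemidef)
    (hAB : A ^ 2 = B) : A = hB.sqrt := by
  rw [hB.sqrt_eq_cfc]
  exact (CFC.sqrt_unique (by rw [← sq]; exact hAB) hA.nonneg).symm

lemma sqrt_congr {n : Type*} [Fintype n] [DecidableEq n] {𝕜 : Type*} [RCLike 𝕜]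
    {M N : Matrix n n 𝕜} (h : M = N) (hM : M.PosSemidef) (hN : N.PosSemidef) :
    hM.sqrt = hN.sqrt := by
  subst h; rfl

lemma real_isHermitian_transpose_eq {n : Type*} {P : Matrix n n ℝ} (h : P.IsHermitian) :
    Pᵀ = P := by
  rw [Matrix.IsHermitian, Matrix.conjTranspose] at h
  convert h using 1
  ext i j
  simp

lemma conjTranspose_map_ofReal' {n : Type*} (C : Matrix n n ℝ) :
    (C.map (Complex.ofReal ·))ᴴ = Cᵀ.map (Complex.ofReal ·) := by
  ext i j
  simp [Matrix.conjTranspose_apply, Matrix.map_apply, Complex.conj_ofReal]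

lemma map_ofReal_mul {n : Type*} [Fintype n] (A B : Matrix n n ℝ) :
    (A * B).map (Complex.ofReal ·) = A.map (Complex.ofReal ·) * B.map (Complex.ofReal ·) := by
  ext i j
  simp [Matrix.mul_apply, Matrix.map_apply]

lemma map_ofReal_neg {n : Type*} (A : Matrix n n ℝ) :
    (-A).map (Complex.ofReal ·) = -(A.map (Complex.ofReal ·)) := by
  ext i j
  simp [Matrix.map_apply]

lemma posSemidef_map_ofReal {n : Type*} [Fintype n] [DecidableEq n] {P : Matrix n n ℝ}
    (hP : P.PosSemidef) : (P.map (Complex.ofReal ·)).PosSemidef := by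
  have h : P.map (Complex.ofReal ·) =
      (hP.sqrt.map (Complex.ofReal ·))ᴴ * (hP.sqrt.map (Complex.ofReal ·)) := by
    rw [conjTranspose_map_ofReal', ← map_ofReal_mul,
      real_isHermitian_transpose_eq hP.posSemidef_sqrt.1, hP.sqrt_mul_self]
  rw [h]
  exact Matrix.posSemidef_conjTranspose_mul_self _

lemma trace_map_ofReal {n : Type*} [Fintype n] (X : Matrix n n ℝ) :
    Matrix.trace (X.map (Complex.ofReal ·)) = Complex.ofReal (Matrix.trace X) := by
  simp [Matrix.trace, Matrix.diag, Matrix.map_apply]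

/-- The real trace norm of a real matrix equals the analogous complex quantity. -/
lemma traceNorm_real_eq {n : Type*} [Fintype n] [DecidableEq n] (C : Matrix n n ℝ) :
    traceNorm C = Complex.re (Matrix.trace
      (Matrix.posSemidef_conjTranspose_mul_self (C.map (Complex.ofReal ·))).sqrt) := by
  have hP : (Cᴴ * C).PosSemidef := Matrix.posSemidef_conjTranspose_mul_self C
  have hmap : (C.map (Complex.ofReal ·))ᴴ * (C.map (Complex.ofReal ·)) =
      (Cᴴ * C).map (Complex.ofReal ·) := by
    rw [conjTranspose_map_ofReal', ← map_ofReal_mul]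
    rfl
  have hPSDmap : ((Cᴴ * C).map (Complex.ofReal ·)).PosSemidef := posSemidef_map_ofReal hP
  have hsq : (hP.sqrt.map (Complex.ofReal ·)) ^ 2 = (Cᴴ * C).map (Complex.ofReal ·) := by
    rw [pow_two, ← map_ofReal_mul, hP.sqrt_mul_self]
  have hPSDs : (hP.sqrt.map (Complex.ofReal ·)).PosSemidef :=
    posSemidef_map_ofReal hP.posSemidef_sqrt
  have heq : hP.sqrt.map (Complex.ofReal ·) = hPSDmap.sqrt :=
    hPSDs.eq_sqrt_of_sq_eq hPSDmap hsq
  rw [sqrt_congr hmap _ hPSDmap, ← heq, trace_map_ofReal]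
  simp [traceNorm]

/-- The Belavkin–Grishanin inequality over `ℂ`: if `A + H ⪰ 0` and `A - H ⪰ 0` with `H`
Hermitian, then the trace norm of `H` is at most `re (tr A)`. -/
lemma key_complex {n : Type*} [Fintype n] [DecidableEq n] (A H : Matrix n n ℂ)
    (hH : H.IsHermitian) (h1 : (A + H).PosSemidef) (h2 : (A - H).PosSemidef) :
    Complex.re (Matrix.trace (Matrix.posSemidef_conjTranspose_mul_self H).sqrt)
      ≤ Complex.re (Matrix.trace A) := by
  set U : Matrix n n ℂ := (hH.eigenvectorUnitary : Matrix n n ℂ) with hUdef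
  have hU1 : star U * U = 1 := mem_unitaryGroup_iff'.mp hH.eigenvectorUnitary.2
  have hU2 : U * star U = 1 := mem_unitaryGroup_iff.mp hH.eigenvectorUnitary.2
  set lam := hH.eigenvalues with hlam
  set D : Matrix n n ℂ := diagonal (Complex.ofReal ∘ lam) with hD
  set Dabs : Matrix n n ℂ := diagonal (Complex.ofReal ∘ fun i => |lam i|) with hDabs
  set B : Matrix n n ℂ := U * Dabs * Uᴴ with hBdef
  have hDabsPSD : Dabs.PosSemidef := posSemidef_diagonal_iff.mpr fun i => by
    simp only [Function.comp_apply]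
    exact_mod_cast abs_nonneg (lam i)
  have hB : B.PosSemidef := hDabsPSD.mul_mul_conjTranspose_same U
  have hspec : H = U * D * star U := hH.spectral_theorem
  have hB2 : B ^ 2 = Hᴴ * H := by
    rw [hH.eq, hspec, pow_two, hBdef]
    rw [Matrix.star_eq_conjTranspose]
    calc U * Dabs * Uᴴ * (U * Dabs * Uᴴ) = U * (Dabs * (Uᴴ * U) * Dabs) * Uᴴ := by
          simp only [Matrix.mul_assoc]
      _ = U * (D * (Uᴴ * U) * D) * Uᴴ := by
          rw [← Matrix.star_eq_conjTranspose, hU1]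
          simp only [Matrix.mul_one, hD, hDabs, diagonal_mul_diagonal]
          congr 1
          funext i
          simp [← Complex.ofReal_mul, abs_mul_abs_self]
      _ = U * D * Uᴴ * (U * D * Uᴴ) := by
          simp only [Matrix.mul_assoc]
  have hsqrt : B = (Matrix.posSemidef_conjTranspose_mul_self H).sqrt :=
    hB.eq_sqrt_of_sq_eq _ hB2
  have htrB : Matrix.trace B = ∑ i, (Complex.ofReal |lam i|) := by
    rw [hBdef, Matrix.trace_mul_cycle, ← Matrix.star_eq_conjTranspose, hU1, Matrix.one_mul,
      hDabs, Matrix.trace_diagonal]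
    rfl
  -- per-eigenvalue bound
  have hbound : ∀ i, |lam i| ≤ Complex.re (star ⇑(hH.eigenvectorBasis i) ⬝ᵥ
      (A *ᵥ ⇑(hH.eigenvectorBasis i))) := by
    intro i
    set v := ⇑(hH.eigenvectorBasis i) with hv
    have heig : lam i = Complex.re (star v ⬝ᵥ (H *ᵥ v)) := hH.eigenvalues_eq i
    have e1 := (Complex.le_def.mp (h1.dotProduct_mulVec_nonneg v)).1
    have e2 := (Complex.le_def.mp (h2.dotProduct_mulVec_nonneg v)).1
    rw [Matrix.add_mulVec, dotProduct_add, Complex.add_re] at e1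
    rw [Matrix.sub_mulVec, dotProduct_sub, Complex.sub_re] at e2
    simp only [Complex.zero_re] at e1 e2
    rw [abs_le]
    constructor <;> [linarith [heig ▸ e1]; linarith [heig ▸ e2]]
  have hdiag : ∀ i, (star U * A * U) i i =
      star ⇑(hH.eigenvectorBasis i) ⬝ᵥ (A *ᵥ ⇑(hH.eigenvectorBasis i)) := by
    intro i
    simp only [Matrix.mul_apply, Matrix.star_apply, dotProduct, Matrix.mulVec,
      Pi.star_apply, hUdef, Matrix.IsHermitian.eigenvectorUnitary_apply]
    simp only [Finset.sum_mul, Finset.mul_sum]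
    rw [Finset.sum_comm]
    exact Finset.sum_congr rfl fun j _ => Finset.sum_congr rfl fun k _ => by ring
  have htrA : Complex.re (Matrix.trace A) = ∑ i, Complex.re ((star U * A * U) i i) := by
    have : Matrix.trace (star U * A * U) = Matrix.trace A := by
      rw [Matrix.trace_mul_cycle, hU2, Matrix.one_mul]
    rw [← this, Matrix.trace]
    simp [Matrix.diag, Complex.re_sum]
  rw [← hsqrt, htrB, htrA]
  have : Complex.re (∑ i, (Complex.ofReal |lam i|)) = ∑ i, |lam i| := by
    simp [Complex.re_sum]
  rw [this]
  apply Finset.sum_le_sum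
  intro i _
  rw [hdiag i]
  exact hbound i

lemma rePart_conjSandwich {n : Type*} [Fintype n] (S : Matrix n n ℝ) (Z : Matrix n n ℂ) :
    rePart (S.map (Complex.ofReal ·) * Z * S.map (Complex.ofReal ·)) = S * rePart Z * S := by
  ext i j
  simp only [rePart, Matrix.mul_apply, Matrix.map_apply, Finset.sum_mul, Complex.re_sum]
  refine Finset.sum_congr rfl fun k _ => Finset.sum_congr rfl fun l _ => ?_
  rw [show ((Complex.ofReal (S i l)) * Z l k * (Complex.ofReal (S k j)) : ℂ) =
    Complex.ofReal (S i l * S k j) * Z l k by push_cast; ring, Complex.re_ofReal_mul]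
  ring

lemma imPart_conjSandwich {n : Type*} [Fintype n] (S : Matrix n n ℝ) (Z : Matrix n n ℂ) :
    imPart (S.map (Complex.ofReal ·) * Z * S.map (Complex.ofReal ·)) = S * imPart Z * S := by
  ext i j
  simp only [imPart, Matrix.mul_apply, Matrix.map_apply, Finset.sum_mul, Complex.im_sum]
  refine Finset.sum_congr rfl fun k _ => Finset.sum_congr rfl fun l _ => ?_
  rw [show ((Complex.ofReal (S i l)) * Z l k * (Complex.ofReal (S k j)) : ℂ) =
    Complex.ofReal (S i l * S k j) * Z l k by push_cast; ring, Complex.im_ofReal_mul]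
  ring

lemma eq_re_add_im {n : Type*} (M : Matrix n n ℂ) :
    M = (rePart M).map (Complex.ofReal ·) + Complex.I • (imPart M).map (Complex.ofReal ·) := by
  ext i j
  simp [rePart, imPart, Matrix.map_apply, Complex.ext_iff]

/-- For `Z ⪰ 0` complex and `W ≻ 0` real, `‖√W (Im Z) √W‖₁ ≤ tr(W Re Z)`, hence
`tr(W Re Z) + ‖√W (Im Z) √W‖₁ ≤ 2 tr(W Re Z)`. -/
theorem holevo_le_twice_helstrom_key {q : Type*} [Fintype q] [DecidableEq q]
    (Z : Matrix q q ℂ) (hZ : Z.PosSemidef) (W : Matrix q q ℝ) (hW : W.PosDef) :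
    traceNorm (hW.posSemidef.sqrt * imPart Z * hW.posSemidef.sqrt)
        ≤ Matrix.trace (W * rePart Z) ∧
    Matrix.trace (W * rePart Z) + traceNorm (hW.posSemidef.sqrt * imPart Z * hW.posSemidef.sqrt)
        ≤ 2 * Matrix.trace (W * rePart Z) := by
  set S : Matrix q q ℝ := hW.posSemidef.sqrt with hSdef
  set Sc : Matrix q q ℂ := S.map (Complex.ofReal ·) with hScdef
  have hSsym : Sᵀ = S := real_isHermitian_transpose_eq hW.posSemidef.posSemidef_sqrt.1
  have hScH : Scᴴ = Sc := by rw [hScdef, conjTranspose_map_ofReal', hSsym]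
  set M : Matrix q q ℂ := Sc * Z * Sc with hMdef
  have hM : M.PosSemidef := by
    have := hZ.mul_mul_conjTranspose_same Sc
    rwa [hScH] at this
  set A : Matrix q q ℝ := S * rePart Z * S with hAdef
  set C : Matrix q q ℝ := S * imPart Z * S with hCdef
  have hre : rePart M = A := rePart_conjSandwich S Z
  have him : imPart M = C := imPart_conjSandwich S Z
  set H : Matrix q q ℂ := Complex.I • C.map (Complex.ofReal ·) with hHdef
  have hMsum : M = A.map (Complex.ofReal ·) + H := by
    have h0 := eq_re_add_im M
    rwa [hre, him] at h0
  -- symmetry of rePart Z, antisymmetry of imPart Z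
  have hreZsym : (rePart Z)ᵀ = rePart Z := by
    ext i j
    have : Z j i = (starRingEnd ℂ) (Z i j) := by
      conv_lhs => rw [← hZ.1]
      simp [Matrix.conjTranspose_apply]
    simp [rePart, Matrix.transpose_apply, this]
  have himZanti : (imPart Z)ᵀ = -imPart Z := by
    ext i j
    have : Z j i = (starRingEnd ℂ) (Z i j) := by
      conv_lhs => rw [← hZ.1]
      simp [Matrix.conjTranspose_apply]
    simp [imPart, Matrix.transpose_apply, this]
  have hAsym : Aᵀ = A := by
    rw [hAdef, Matrix.transpose_mul, Matrix.transpose_mul, hSsym, hreZsym, Matrix.mul_assoc]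
  have hCanti : Cᵀ = -C := by
    rw [hCdef, Matrix.transpose_mul, Matrix.transpose_mul, hSsym, himZanti]
    rw [Matrix.mul_assoc, Matrix.neg_mul, Matrix.mul_neg]
  have hCmapT : (C.map (Complex.ofReal ·))ᵀ = -(C.map (Complex.ofReal ·)) := by
    have : (C.map (Complex.ofReal ·))ᵀ = Cᵀ.map (Complex.ofReal ·) := by
      ext i j; simp [Matrix.map_apply]
    rw [this, hCanti, map_ofReal_neg]
  have hHherm : H.IsHermitian := by
    rw [Matrix.IsHermitian, hHdef, Matrix.conjTranspose_smul, conjTranspose_map_ofReal',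
      hCanti, map_ofReal_neg]
    simp [Complex.conj_I]
  have h1 : (A.map (Complex.ofReal ·) + H).PosSemidef := hMsum ▸ hM
  have h2 : (A.map (Complex.ofReal ·) - H).PosSemidef := by
    have hMT : Mᵀ = A.map (Complex.ofReal ·) - H := by
      rw [hMsum, Matrix.transpose_add]
      have hAT : (A.map (Complex.ofReal ·))ᵀ = A.map (Complex.ofReal ·) := by
        rw [show (A.map (Complex.ofReal ·))ᵀ = Aᵀ.map (Complex.ofReal ·) from by
          ext i j; simp [Matrix.map_apply], hAsym]
      have hHT : Hᵀ = -H := by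
        rw [hHdef, Matrix.transpose_smul, hCmapT, smul_neg]
      rw [hAT, hHT, ← sub_eq_add_neg]
    rw [← hMT]
    exact hM.transpose
  have hkey := key_complex (A.map (Complex.ofReal ·)) H hHherm h1 h2
  -- identify Hᴴ * H with (C.map)ᴴ * (C.map)
  have hHH : Hᴴ * H = (C.map (Complex.ofReal ·))ᴴ * (C.map (Complex.ofReal ·)) := by
    rw [hHdef, Matrix.conjTranspose_smul, Matrix.smul_mul, Matrix.mul_smul, smul_smul]
    simp [Complex.conj_I]
  have htn : traceNorm C ≤ Complex.re (Matrix.trace (A.map (Complex.ofReal ·))) := by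
    rw [traceNorm_real_eq C,
      sqrt_congr hHH.symm (Matrix.posSemidef_conjTranspose_mul_self _)
        (Matrix.posSemidef_conjTranspose_mul_self H)]
    exact hkey
  have htrA : Complex.re (Matrix.trace (A.map (Complex.ofReal ·))) =
      Matrix.trace (W * rePart Z) := by
    rw [trace_map_ofReal, Complex.ofReal_re, hAdef, Matrix.trace_mul_cycle, hSdef,
      hW.posSemidef.sqrt_mul_self]
  rw [htrA] at htn
  exact ⟨htn, by linarith⟩
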